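/- For all integers r ≥ 0, q ≥ 1, n ≥ q + r, and every geometric-line-free set A ⊆ [3]^n, one has 2·α_r(A) + α_{r+q}(A) ≤ 2, where α_j(A) = |A ∩ T_j| / |T_j| and T_j is the set of words in [3]^n with exactly j coordinates equal to 2. -/

import Mathlib

/-- The cube \`[3]^n = {1,2,3}^n\`, viewed inside \`ℤ^n\`. -/
def cube (n : ℕ) : Finset (Fin n → ℤ) :=
  Fintype.piFinset fun _ => ({1, 2, 3} : Finset ℤ)

/-- A Moser set: a set containing no geometric line \`{a, a+r, a+2r}\` with \`r ≠ 0\`. -/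
def MoserFree {n : ℕ} (A : Finset (Fin n → ℤ)) : Prop :=
  ¬ ∃ a r : Fin n → ℤ, r ≠ 0 ∧ a ∈ A ∧ a + r ∈ A ∧ a + r + r ∈ A

/-- The density \`α_j(A)\`: the fraction of the set of words of \`[3]^n\` with exactly \`j\`
coordinates equal to 2 (a set of size \`C(n,j)·2^(n-j)\`) that belongs to \`A\`. -/
noncomputable def density (n : ℕ) (A : Finset (Fin n → ℤ)) (j : ℕ) : ℝ :=
  ((A.filter fun x => (Finset.univ.filter fun t => x t = (2 : ℤ)).card = j).card : ℝ) /
    ((n.choose j : ℝ) * 2 ^ (n - j))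

def Zset {n : ℕ} (x : Fin n → ℤ) : Finset (Fin n) :=
  Finset.univ.filter fun t => x t = (2 : ℤ)

def compat {n : ℕ} (e c : Fin n → ℤ) : Prop :=
  ∀ i, c i = e i ∨ (c i = 2 ∧ e i ≠ 2)

instance {n : ℕ} (e c : Fin n → ℤ) : Decidable (compat e c) :=
  Fintype.decidableForallFintype

lemma mem_Zset {n : ℕ} {x : Fin n → ℤ} {i : Fin n} : i ∈ Zset x ↔ x i = 2 := by
  simp [Zset]

lemma mem_cube {n : ℕ} {x : Fin n → ℤ} :
    x ∈ cube n ↔ ∀ i, x i = 1 ∨ x i = 2 ∨ x i = 3 := by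
  simp [cube, Fintype.mem_piFinset]

lemma Zsubset {n : ℕ} {e c : Fin n → ℤ} (h : compat e c) : Zset e ⊆ Zset c := by
  intro i hi
  rw [mem_Zset] at hi ⊢
  rcases h i with h' | h'
  · rw [h', hi]
  · exact absurd hi h'.2

lemma count_compat (n : ℕ) (c : Fin n → ℤ) (hc : c ∈ cube n) (k d : ℕ)
    (hcard : (Zset c).card = k + d) :
    ((cube n).filter fun e => compat e c ∧ (Zset e).card = k).card
      = (k + d).choose d * 2 ^ d := by
  classical
  set s := (cube n).filter fun e => compat e c ∧ (Zset e).card = k with hs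
  have hf : ∀ e ∈ s, Zset c \ Zset e ∈ (Zset c).powersetCard d := by
    intro e he
    rw [hs, Finset.mem_filter] at he
    obtain ⟨hec, hcompat, hk⟩ := he
    rw [Finset.mem_powersetCard]
    refine ⟨Finset.sdiff_subset, ?_⟩
    rw [Finset.card_sdiff_of_subset (Zsubset hcompat), hcard, hk]
    omega
  rw [Finset.card_eq_sum_card_fiberwise hf]
  have hfib : ∀ S ∈ (Zset c).powersetCard d,
      (s.filter fun e => Zset c \ Zset e = S).card = 2 ^ d := by
    intro S hS
    rw [Finset.mem_powersetCard] at hS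
    obtain ⟨hSsub, hScard⟩ := hS
    have key : ∀ f : ∀ a : Fin n, a ∈ S → ℤ,
        f ∈ S.pi (fun _ => ({1, 3} : Finset ℤ)) →
        (fun i => if h : i ∈ S then f i h else c i) ∈
          s.filter fun e => Zset c \ Zset e = S := by
      intro f hfmem
      rw [Finset.mem_pi] at hfmem
      have hz : Zset (fun i => if h : i ∈ S then f i h else c i) = Zset c \ S := by
        ext i
        simp only [mem_Zset, Finset.mem_sdiff]
        by_cases h : i ∈ S
        · rw [dif_pos h]
          have := hfmem i h
          simp only [Finset.mem_insert, Finset.mem_singleton] at this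
          constructor
          · rintro h2; rcases this with h1 | h1 <;> omega
          · rintro ⟨_, h2⟩; exact absurd h h2
        · rw [dif_neg h]
          exact ⟨fun h2 => ⟨h2, h⟩, fun h2 => h2.1⟩
      rw [Finset.mem_filter, hs, Finset.mem_filter]
      refine ⟨⟨?_, ?_, ?_⟩, ?_⟩
      · rw [mem_cube]
        intro i
        by_cases h : i ∈ S
        · have := hfmem i h
          simp only [Finset.mem_insert, Finset.mem_singleton] at this
          simp only [dif_pos h]; tauto
        · simp only [dif_neg h]; exact mem_cube.mp hc i
      · intro i
        by_cases h : i ∈ S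
        · right
          refine ⟨mem_Zset.mp (hSsub h), ?_⟩
          simp only [dif_pos h]
          have := hfmem i h
          simp only [Finset.mem_insert, Finset.mem_singleton] at this
          rcases this with h1 | h1 <;> omega
        · left; simp only [dif_neg h]
      · rw [hz, Finset.card_sdiff_of_subset hSsub, hcard, hScard]; omega
      · rw [hz, sdiff_sdiff_eq_self hSsub]
    have := Finset.card_nbij' (s := s.filter fun e => Zset c \ Zset e = S)
      (t := S.pi (fun _ => ({1, 3} : Finset ℤ)))
      (fun e => fun a _ => e a)
      (fun f => fun i => if h : i ∈ S then f i h else c i)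
      ?_ (fun f hf => key f hf) ?_ ?_
    · rw [this, Finset.card_pi, Finset.prod_const, hScard]
      norm_num
    · -- forward membership
      intro e he
      rw [Finset.mem_coe, Finset.mem_filter, hs, Finset.mem_filter] at he
      obtain ⟨⟨hec, hcompat, hk⟩, hfiber⟩ := he
      rw [Finset.mem_coe, Finset.mem_pi]
      intro a ha
      rw [← hfiber, Finset.mem_sdiff, mem_Zset, mem_Zset] at ha
      have := mem_cube.mp hec a
      simp only [Finset.mem_insert, Finset.mem_singleton]
      rcases this with h | h | h <;> omega
    · -- left inverse
      intro e he
      rw [Finset.mem_coe, Finset.mem_filter, hs, Finset.mem_filter] at he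
      obtain ⟨⟨hec, hcompat, hk⟩, hfiber⟩ := he
      funext i
      show (if h : i ∈ S then e i else c i) = e i
      by_cases h : i ∈ S
      · rw [dif_pos h]
      · rw [dif_neg h]
        rw [← hfiber, Finset.mem_sdiff, mem_Zset, mem_Zset] at h
        push_neg at h
        rcases hcompat i with h' | h'
        · exact h'
        · exact absurd (h h'.1) h'.2
    · -- right inverse
      intro f hf
      funext i hi
      show (if h : i ∈ S then f i h else c i) = f i hi
      rw [dif_pos hi]
  rw [Finset.sum_congr rfl hfib, Finset.sum_const, Finset.card_powersetCard, hcard, smul_eq_mul]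

lemma count_centers (n r q : ℕ) (e : Fin n → ℤ) (he : e ∈ cube n) (hr : (Zset e).card = r) :
    ((cube n).filter fun c => compat e c ∧ (Zset c).card = r + q).card = (n - r).choose q := by
  classical
  have hcompl : ((Zset e)ᶜ : Finset (Fin n)).card = n - r := by
    rw [Finset.card_compl, hr, Fintype.card_fin]
  have key := Finset.card_nbij'
    (s := (cube n).filter fun c => compat e c ∧ (Zset c).card = r + q)
    (t := ((Zset e)ᶜ).powersetCard q)
    (fun c => Zset c \ Zset e)
    (fun S => fun i => if i ∈ S then 2 else e i)
    ?_ ?_ ?_ ?_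
  · rw [key, Finset.card_powersetCard, hcompl]
  · intro c hc
    rw [Finset.mem_coe, Finset.mem_filter] at hc
    obtain ⟨hcc, hcompat, hcard⟩ := hc
    rw [Finset.mem_coe, Finset.mem_powersetCard]
    constructor
    · intro i hi
      rw [Finset.mem_sdiff] at hi
      rw [Finset.mem_compl]
      exact hi.2
    · rw [Finset.card_sdiff_of_subset (Zsubset hcompat), hcard, hr]; omega
  · intro S hS
    rw [Finset.mem_coe, Finset.mem_powersetCard] at hS
    obtain ⟨hSsub, hScard⟩ := hS
    have hdisj : Disjoint (Zset e) S := by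
      rw [Finset.disjoint_right]
      intro i hi
      exact Finset.mem_compl.mp (hSsub hi)
    have hz : Zset (fun i => if i ∈ S then 2 else e i) = Zset e ∪ S := by
      ext i
      simp only [mem_Zset, Finset.mem_union]
      by_cases h : i ∈ S
      · simp [h]
      · simp only [if_neg h, mem_Zset]
        tauto
    rw [Finset.mem_coe, Finset.mem_filter]
    refine ⟨?_, ?_, ?_⟩
    · rw [mem_cube]
      intro i
      by_cases h : i ∈ S
      · simp [h]
      · simp only [if_neg h]; exact mem_cube.mp he i
    · intro i
      by_cases h : i ∈ S
      · right
        simp only [if_pos h]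
        refine ⟨trivial, ?_⟩
        intro h2
        exact Finset.mem_compl.mp (hSsub h) (mem_Zset.mpr h2)
      · left; simp only [if_neg h]
    · rw [hz, Finset.card_union_of_disjoint hdisj, hr, hScard]
  · intro c hc
    rw [Finset.mem_coe, Finset.mem_filter] at hc
    obtain ⟨hcc, hcompat, hcard⟩ := hc
    funext i
    show (if i ∈ Zset c \ Zset e then 2 else e i) = c i
    by_cases h : i ∈ Zset c \ Zset e
    · rw [if_pos h]
      rw [Finset.mem_sdiff] at h
      exact (mem_Zset.mp h.1).symm
    · rw [if_neg h]
      rw [Finset.mem_sdiff, mem_Zset, mem_Zset] at h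
      push_neg at h
      rcases hcompat i with h' | h'
      · exact h'.symm
      · exact absurd (h h'.1) h'.2
  · intro S hS
    rw [Finset.mem_coe, Finset.mem_powersetCard] at hS
    obtain ⟨hSsub, hScard⟩ := hS
    ext i
    simp only [Finset.mem_sdiff, mem_Zset]
    constructor
    · rintro ⟨h1, h2⟩
      by_cases h : i ∈ S
      · exact h
      · rw [if_neg h] at h1; exact absurd h1 h2
    · intro h
      refine ⟨by rw [if_pos h], ?_⟩
      intro h2
      exact Finset.mem_compl.mp (hSsub h) (mem_Zset.mpr h2)

lemma Tcard (n j : ℕ) (hj : j ≤ n) :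
    ((cube n).filter fun x => (Zset x).card = j).card = n.choose j * 2 ^ (n - j) := by
  classical
  have h2 : (fun _ => (2 : ℤ) : Fin n → ℤ) ∈ cube n :=
    mem_cube.mpr fun i => Or.inr (Or.inl rfl)
  have hz : Zset (fun _ => (2 : ℤ) : Fin n → ℤ) = Finset.univ := by
    ext i; simp [mem_Zset]
  have hzc : (Zset (fun _ => (2 : ℤ) : Fin n → ℤ)).card = j + (n - j) := by
    rw [hz, Finset.card_univ, Fintype.card_fin]; omega
  have := count_compat n (fun _ => 2) h2 j (n - j) hzc
  have hfe : ((cube n).filter fun e => compat e (fun _ => (2 : ℤ)) ∧ (Zset e).card = j)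
      = (cube n).filter fun x => (Zset x).card = j := by
    apply Finset.filter_congr
    intro x hx
    simp only [and_iff_right_iff_imp]
    intro _
    intro i
    by_cases h : x i = 2
    · exact Or.inl h.symm
    · exact Or.inr ⟨rfl, h⟩
  rw [hfe] at this
  rw [this]
  congr 1
  have : j + (n - j) = n := by omega
  rw [this, Nat.choose_symm hj]

lemma pair_bound {n r q : ℕ} (hq : 1 ≤ q) {A : Finset (Fin n → ℤ)} (hA : A ⊆ cube n)
    (hm : MoserFree A) {c : Fin n → ℤ} (hcc : c ∈ cube n) (hcard : (Zset c).card = r + q)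
    (hcA : c ∈ A) :
    2 * (A.filter fun e => compat e c ∧ (Zset e).card = r).card
      ≤ ((cube n).filter fun e => compat e c ∧ (Zset e).card = r).card := by
  classical
  set F := A.filter fun e => compat e c ∧ (Zset e).card = r with hF
  set E := (cube n).filter fun e => compat e c ∧ (Zset e).card = r with hE
  have hFE : F ⊆ E := by
    intro x hx
    rw [hF, Finset.mem_filter] at hx
    rw [hE, Finset.mem_filter]
    exact ⟨hA hx.1, hx.2⟩
  have hmap : ∀ e ∈ F, (fun i => 2 * c i - e i) ∈ E \ F := by
    intro e he
    rw [hF, Finset.mem_filter] at he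
    obtain ⟨heA, hcompat, hk⟩ := he
    have hec : e ∈ cube n := hA heA
    have hvals : ∀ i, (2 * c i - e i = e i ∧ c i = e i) ∨
        (c i = 2 ∧ e i ≠ 2 ∧ (e i = 1 ∧ 2 * c i - e i = 3 ∨ e i = 3 ∧ 2 * c i - e i = 1)) := by
      intro i
      rcases hcompat i with h | h
      · left; constructor <;> omega
      · right
        have := mem_cube.mp hec i
        refine ⟨h.1, h.2, ?_⟩
        rcases this with h1 | h1 | h1 <;> omega
    have hzz : Zset (fun i => 2 * c i - e i) = Zset e := by
      ext i
      simp only [mem_Zset]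
      rcases hvals i with h | h
      · rw [h.1]
      · constructor
        · intro h2; rcases h.2.2 with h3 | h3 <;> omega
        · intro h2; exact absurd h2 h.2.1
    have hmem : (fun i => 2 * c i - e i) ∈ E := by
      rw [hE, Finset.mem_filter]
      refine ⟨?_, ?_, ?_⟩
      · rw [mem_cube]
        intro i
        show 2 * c i - e i = 1 ∨ 2 * c i - e i = 2 ∨ 2 * c i - e i = 3
        rcases hvals i with h | h
        · rw [h.1]; exact mem_cube.mp hec i
        · rcases h.2.2 with h3 | h3 <;> omega
      · intro i
        show c i = 2 * c i - e i ∨ (c i = 2 ∧ 2 * c i - e i ≠ 2)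
        rcases hvals i with h | h
        · left; omega
        · right
          refine ⟨h.1, ?_⟩
          rcases h.2.2 with h3 | h3 <;> omega
      · rw [hzz, hk]
    have hnotA : (fun i => 2 * c i - e i) ∉ A := by
      intro habs
      apply hm
      refine ⟨e, c - e, ?_, heA, ?_, ?_⟩
      · intro h0
        have : c = e := by
          funext i
          have := congrFun h0 i
          simp only [Pi.sub_apply, Pi.zero_apply] at this
          omega
        rw [this, hk] at hcard
        omega
      · have : e + (c - e) = c := by
          funext i; simp only [Pi.add_apply, Pi.sub_apply]; ring
        rw [this]; exact hcA
      · have : e + (c - e) + (c - e) = fun i => 2 * c i - e i := by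
          funext i; simp only [Pi.add_apply, Pi.sub_apply]; ring
        rw [this]; exact habs
    rw [Finset.mem_sdiff]
    refine ⟨hmem, ?_⟩
    rw [hF, Finset.mem_filter]
    intro habs
    exact hnotA habs.1
  have hinj : Set.InjOn (fun e : Fin n → ℤ => fun i => 2 * c i - e i) ↑F := by
    intro e1 _ e2 _ h
    funext i
    have := congrFun h i
    simp only at this
    omega
  have hcard2 : F.card ≤ (E \ F).card :=
    Finset.card_le_card_of_injOn _ hmap hinj
  have := Finset.card_sdiff_of_subset hFE
  have := Finset.card_le_card hFE
  omega

lemma double_count (n r q : ℕ) (A : Finset (Fin n → ℤ)) :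
    ∑ c ∈ (cube n).filter (fun c => (Zset c).card = r + q),
        (A.filter fun e => compat e c ∧ (Zset e).card = r).card
      = ∑ e ∈ A.filter (fun e => (Zset e).card = r),
        ((cube n).filter fun c => compat e c ∧ (Zset c).card = r + q).card := by
  classical
  set Tc := (cube n).filter (fun c => (Zset c).card = r + q) with hTc
  calc ∑ c ∈ Tc, (A.filter fun e => compat e c ∧ (Zset e).card = r).card
      = ∑ c ∈ Tc, ∑ e ∈ A, if compat e c ∧ (Zset e).card = r then 1 else 0 :=
        Finset.sum_congr rfl fun c _ => Finset.card_filter _ _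
    _ = ∑ e ∈ A, ∑ c ∈ Tc, if compat e c ∧ (Zset e).card = r then 1 else 0 :=
        Finset.sum_comm
    _ = ∑ e ∈ A, if (Zset e).card = r then (∑ c ∈ Tc, if compat e c then 1 else 0) else 0 := by
        refine Finset.sum_congr rfl fun e _ => ?_
        by_cases h : (Zset e).card = r
        · rw [if_pos h]
          refine Finset.sum_congr rfl fun c _ => by simp [h]
        · rw [if_neg h]
          refine Finset.sum_eq_zero fun c _ => by simp [h]
    _ = ∑ e ∈ A.filter (fun e => (Zset e).card = r), ∑ c ∈ Tc, if compat e c then 1 else 0 :=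
        (Finset.sum_filter _ _).symm
    _ = ∑ e ∈ A.filter (fun e => (Zset e).card = r), (Tc.filter fun c => compat e c).card :=
        Finset.sum_congr rfl fun e _ => (Finset.card_filter _ _).symm
    _ = ∑ e ∈ A.filter (fun e => (Zset e).card = r),
        ((cube n).filter fun c => compat e c ∧ (Zset c).card = r + q).card := by
        refine Finset.sum_congr rfl fun e _ => ?_
        congr 1
        rw [hTc, Finset.filter_filter]
        apply Finset.filter_congr
        intro x _
        tauto

lemma density_eq (n : ℕ) (A : Finset (Fin n → ℤ)) (j : ℕ) :
    density n A j = ((A.filter fun x => (Zset x).card = j).card : ℝ) /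
      ((n.choose j : ℝ) * 2 ^ (n - j)) := rfl

/-- For all `r ≥ 0`, `q ≥ 1`, `n ≥ q + r` and every Moser set `A ⊆ [3]^n`:
`2·α_r(A) + α_{r+q}(A) ≤ 2`. -/
theorem two_alpha_inequality (r q n : ℕ) (hq : 1 ≤ q) (hn : q + r ≤ n)
    (A : Finset (Fin n → ℤ)) (hA : A ⊆ cube n) (hm : MoserFree A) :
    2 * density n A r + density n A (r + q) ≤ 2 := by
  classical
  set m1 := (A.filter fun x => (Zset x).card = r).card with hm1
  set m2 := (A.filter fun x => (Zset x).card = (r + q)).card with hm2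
  set Tc := (cube n).filter (fun c => (Zset c).card = r + q) with hTc
  have hTcard : Tc.card = n.choose (r + q) * 2 ^ (n - (r + q)) := Tcard n (r + q) (by omega)
  -- pointwise bound for each center
  have hpt : ∀ c ∈ Tc, 2 * (A.filter fun e => compat e c ∧ (Zset e).card = r).card
      + (if c ∈ A then (r + q).choose q * 2 ^ q else 0)
      ≤ 2 * ((r + q).choose q * 2 ^ q) := by
    intro c hc
    rw [hTc, Finset.mem_filter] at hc
    have hE := count_compat n c hc.1 r q hc.2
    have hsub : (A.filter fun e => compat e c ∧ (Zset e).card = r).card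
        ≤ (r + q).choose q * 2 ^ q := by
      rw [← hE]
      exact Finset.card_le_card (Finset.filter_subset_filter _ hA)
    by_cases hcA : c ∈ A
    · rw [if_pos hcA]
      have := pair_bound hq hA hm hc.1 hc.2 hcA
      rw [hE] at this
      omega
    · rw [if_neg hcA]
      omega
  have hsum := Finset.sum_le_sum hpt
  rw [Finset.sum_add_distrib] at hsum
  have hS1 : ∑ c ∈ Tc, 2 * (A.filter fun e => compat e c ∧ (Zset e).card = r).card
      = 2 * (m1 * (n - r).choose q) := by
    have hcc : ∀ e ∈ A.filter (fun e => (Zset e).card = r),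
        ((cube n).filter fun c => compat e c ∧ (Zset c).card = r + q).card
          = (n - r).choose q := by
      intro e he
      rw [Finset.mem_filter] at he
      exact count_centers n r q e (hA he.1) he.2
    rw [← Finset.mul_sum, hTc, double_count n r q A, Finset.sum_congr rfl hcc,
      Finset.sum_const, smul_eq_mul]
  have hS2 : ∑ c ∈ Tc, (if c ∈ A then (r + q).choose q * 2 ^ q else 0)
      = ((r + q).choose q * 2 ^ q) * m2 := by
    rw [← Finset.sum_filter, Finset.sum_const, smul_eq_mul, mul_comm]
    congr 2
    ext x
    simp only [hTc, Finset.mem_filter]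
    constructor
    · rintro ⟨⟨_, h2⟩, h3⟩
      exact ⟨h3, h2⟩
    · rintro ⟨h1, h2⟩
      exact ⟨⟨hA h1, h2⟩, h1⟩
  have hS3 : ∑ _c ∈ Tc, 2 * ((r + q).choose q * 2 ^ q)
      = 2 * ((r + q).choose q * 2 ^ q) * Tc.card := by
    rw [Finset.sum_const, smul_eq_mul, mul_comm]
  rw [hS1, hS2, hS3, hTcard] at hsum
  -- hsum : 2 * (m1 * (n-r).choose q) + ((r+q).choose q * 2^q) * m2
  --        ≤ 2 * ((r+q).choose q * 2^q) * (n.choose (r+q) * 2^(n-(r+q)))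
  -- move to the reals
  have hcm : (n.choose (r + q) : ℝ) * (r + q).choose q
      = (n.choose r : ℝ) * (n - r).choose q := by
    have h1 := Nat.choose_mul (n := n) (show r ≤ r + q by omega)
    have h2 : r + q - r = q := by omega
    have h3 : (r + q).choose r = (r + q).choose q := by
      have := Nat.choose_symm (show q ≤ r + q by omega)
      rwa [show r + q - q = r by omega] at this
    rw [h2, h3] at h1
    exact_mod_cast h1
  have hpow : (2 : ℝ) ^ (n - r) = 2 ^ q * 2 ^ (n - (r + q)) := by
    rw [← pow_add]
    congr 1
    omega
  have hch1 : (0 : ℝ) < (n.choose r : ℝ) := by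
    exact_mod_cast Nat.choose_pos (show r ≤ n by omega)
  have hch2 : (0 : ℝ) < (n.choose (r + q) : ℝ) := by
    exact_mod_cast Nat.choose_pos (show r + q ≤ n by omega)
  have hD1 : (0 : ℝ) < (n.choose r : ℝ) * 2 ^ (n - r) := by positivity
  have hD2 : (0 : ℝ) < (n.choose (r + q) : ℝ) * 2 ^ (n - (r + q)) := by positivity
  rw [density_eq, density_eq, ← hm1, ← hm2]
  have hcomb : 2 * ((m1 : ℝ) / ((n.choose r : ℝ) * 2 ^ (n - r)))
      + (m2 : ℝ) / ((n.choose (r + q) : ℝ) * 2 ^ (n - (r + q)))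
      = (2 * m1 * ((n.choose (r + q) : ℝ) * 2 ^ (n - (r + q)))
          + m2 * ((n.choose r : ℝ) * 2 ^ (n - r)))
        / (((n.choose r : ℝ) * 2 ^ (n - r)) * ((n.choose (r + q) : ℝ) * 2 ^ (n - (r + q)))) := by
    field_simp
  rw [hcomb, div_le_iff₀ (by positivity)]
  have keyR : (2 : ℝ) * (m1 * (n - r).choose q) + ((r + q).choose q : ℝ) * 2 ^ q * m2
      ≤ 2 * (((r + q).choose q : ℝ) * 2 ^ q) * ((n.choose (r + q) : ℝ) * 2 ^ (n - (r + q))) := by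
    exact_mod_cast hsum
  have hKq : (0 : ℝ) < ((r + q).choose q : ℝ) := by
    exact_mod_cast Nat.choose_pos (Nat.le_add_left q r)
  refine le_of_mul_le_mul_left ?_ hKq
  have hmul := mul_le_mul_of_nonneg_right keyR
    (show (0 : ℝ) ≤ (n.choose r : ℝ) * 2 ^ (n - (r + q)) by positivity)
  calc ((r + q).choose q : ℝ)
        * (2 * m1 * ((n.choose (r + q) : ℝ) * 2 ^ (n - (r + q)))
            + m2 * ((n.choose r : ℝ) * 2 ^ (n - r)))
      = (2 * (m1 : ℝ) * (n - r).choose q + ((r + q).choose q : ℝ) * 2 ^ q * m2)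
          * ((n.choose r : ℝ) * 2 ^ (n - (r + q))) := by
        linear_combination (2 * (m1 : ℝ) * 2 ^ (n - (r + q))) * hcm
          + ((m2 : ℝ) * (n.choose r : ℝ) * ((r + q).choose q : ℝ)) * hpow
    _ ≤ (2 * (((r + q).choose q : ℝ) * 2 ^ q) * ((n.choose (r + q) : ℝ) * 2 ^ (n - (r + q))))
          * ((n.choose r : ℝ) * 2 ^ (n - (r + q))) := by
        calc (2 * (m1 : ℝ) * (n - r).choose q + ((r + q).choose q : ℝ) * 2 ^ q * m2)
              * ((n.choose r : ℝ) * 2 ^ (n - (r + q)))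
            = ((2 : ℝ) * (m1 * (n - r).choose q) + ((r + q).choose q : ℝ) * 2 ^ q * m2)
              * ((n.choose r : ℝ) * 2 ^ (n - (r + q))) := by ring
          _ ≤ _ := hmul
    _ = ((r + q).choose q : ℝ)
          * (2 * (((n.choose r : ℝ) * 2 ^ (n - r))
            * ((n.choose (r + q) : ℝ) * 2 ^ (n - (r + q))))) := by
        linear_combination (-2 * ((r + q).choose q : ℝ) * (n.choose (r + q) : ℝ)
          * 2 ^ (n - (r + q)) * (n.choose r : ℝ)) * hpow
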